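/- arXiv:2311.15388 — 2 statements merged into one kernel-verified Lean document; each statement's English description precedes it below -/
import Mathlib

section
/- The bivariate formal power series A(x,y) = Σ_{n,m ≥ 0} a(n,m) xⁿ yᵐ over ℤ satisfies (1 - x - x² + x³ - x³y²) · A(x,y) = 1 - x - x² + x³ + xy - x³y. -/
/-- `l` is a composition of `n`: a finite list of positive integers summing to `n`
(the empty list is the unique composition of `0`). -/
def IsComposition (n : ℕ) (l : List ℕ) : Prop :=
  (∀ x ∈ l, 0 < x) ∧ l.sum = n

/-- The Arndt condition: `σ_{2i-1} > σ_{2i}` (1-based) for every `i` with `2i ≤ ℓ`;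
with 0-based indices, `l[2i] > l[2i+1]` whenever `2i+1 < l.length`. -/
def IsArndt (l : List ℕ) : Prop :=
  ∀ i : ℕ, 2 * i + 1 < l.length → l.getD (2 * i + 1) 0 < l.getD (2 * i) 0

/-- `arndt n` is the number of Arndt compositions of `n`. -/
noncomputable def arndt (n : ℕ) : ℕ :=
  Set.ncard {l : List ℕ | IsComposition n l ∧ IsArndt l}

/-- `arndtParts n m` is the number of Arndt compositions of `n` with exactly `m` parts. -/
noncomputable def arndtParts (n m : ℕ) : ℕ :=
  Set.ncard {l : List ℕ | IsComposition n l ∧ IsArndt l ∧ l.length = m}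


lemma setFinite (n : ℕ) (P : List ℕ → Prop) :
    {l : List ℕ | IsComposition n l ∧ P l}.Finite := by
  apply Set.Finite.subset (Set.finite_range (Composition.blocks (n := n)))
  rintro l ⟨⟨h1, h2⟩, -⟩
  exact ⟨⟨l, fun {x} hx => h1 x hx, h2⟩, rfl⟩

lemma arndtParts_zero (n : ℕ) : arndtParts n 0 = if n = 0 then 1 else 0 := by
  unfold arndtParts
  split_ifs with h
  · subst h
    convert Set.ncard_singleton ([] : List ℕ)
    ext l
    simp only [Set.mem_setOf_eq, Set.mem_singleton_iff]
    constructor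
    · rintro ⟨-, -, hl⟩; exact List.length_eq_zero_iff.mp hl
    · rintro rfl; exact ⟨⟨by simp, rfl⟩, fun i hi => by simp at hi, rfl⟩
  · convert Set.ncard_empty (List ℕ)
    ext l
    simp only [Set.mem_setOf_eq, Set.mem_empty_iff_false, iff_false]
    rintro ⟨⟨-, hs⟩, -, hl⟩
    exact h (by rw [← hs, List.length_eq_zero_iff.mp hl]; simp)

lemma arndtParts_one (n : ℕ) : arndtParts n 1 = if n = 0 then 0 else 1 := by
  unfold arndtParts
  split_ifs with h
  · subst h
    convert Set.ncard_empty (List ℕ)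
    ext l
    simp only [Set.mem_setOf_eq, Set.mem_empty_iff_false, iff_false]
    rintro ⟨⟨hp, hs⟩, -, hl⟩
    obtain ⟨a, rfl⟩ := List.length_eq_one_iff.mp hl
    simp at hs
    exact absurd (hs ▸ hp a (by simp)) (by simp [hs])
  · convert Set.ncard_singleton ([n] : List ℕ)
    ext l
    simp only [Set.mem_setOf_eq, Set.mem_singleton_iff]
    constructor
    · rintro ⟨⟨-, hs⟩, -, hl⟩
      obtain ⟨a, rfl⟩ := List.length_eq_one_iff.mp hl
      simp at hs; rw [hs]
    · rintro rfl
      refine ⟨⟨?_, by simp⟩, fun i hi => by simp at hi, rfl⟩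
      intro x hx; simp at hx; omega

lemma isArndt_cons_cons {a b : ℕ} {l : List ℕ} :
    IsArndt (a :: b :: l) ↔ b < a ∧ IsArndt l := by
  constructor
  · intro h
    refine ⟨h 0 (by simp), fun i hi => ?_⟩
    have := h (i + 1) (by simp; omega)
    simpa [List.getD, Nat.mul_add] using this
  · rintro ⟨hab, h⟩ i hi
    match i with
    | 0 => simpa using hab
    | (i+1) =>
      have := h i (by simp at hi; omega)
      simpa [List.getD, Nat.mul_add] using this

noncomputable def aT (n m : ℕ) : ℕ :=
  ∑ j ∈ Finset.range (n / 2), arndtParts (n - 2 * (j + 1)) m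

lemma arndtParts_two (n m : ℕ) :
    arndtParts n (m + 2) = ∑ k ∈ Finset.range n, aT k m := by
  classical
  set P : Finset ((_ : ℕ) × ℕ) := (Finset.range n).sigma (fun k => Finset.range (k / 2)) with hP
  set cns : (Σ _ : ℕ, ℕ) → List ℕ → List ℕ :=
    fun p l => (n - p.1 + p.2 + 1) :: (p.2 + 1) :: l with hcns
  have hF : ∀ p : (Σ _ : ℕ, ℕ), _ := fun p => setFinite (p.1 - 2 * (p.2 + 1))
    (fun l => IsArndt l ∧ l.length = m)
  set F : (Σ _ : ℕ, ℕ) → Finset (List ℕ) :=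
    fun p => Finset.image (cns p) (hF p).toFinset with hFdef
  have hset : {l : List ℕ | IsComposition n l ∧ IsArndt l ∧ l.length = m + 2}
      = ↑(P.biUnion F) := by
    ext l
    simp only [Set.mem_setOf_eq, Finset.coe_biUnion, Set.mem_iUnion, Finset.mem_coe,
      Finset.mem_biUnion, hFdef, Finset.mem_image, Set.Finite.mem_toFinset, Set.mem_setOf_eq,
      hP, Finset.mem_sigma, Finset.mem_range]
    constructor
    · rintro ⟨⟨hpos, hsum⟩, harndt, hlen⟩
      match l with
      | a :: b :: t =>
        obtain ⟨hab, ht⟩ := isArndt_cons_cons.mp harndt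
        have hb : 1 ≤ b := hpos b (by simp)
        have hsum' : a + b + t.sum = n := by simp at hsum; omega
        refine ⟨⟨n - (a - b), b - 1⟩, ⟨by dsimp only; omega, by dsimp only; omega⟩, t,
          ⟨⟨⟨fun x hx => hpos x (by simp [hx]), by dsimp only; omega⟩, ht, by simpa using hlen⟩, ?_⟩⟩
        simp only [hcns]
        have h1 : n - (n - (a - b)) + (b - 1) + 1 = a := by omega
        have h2 : b - 1 + 1 = b := by omega
        rw [h1, h2]
    · rintro ⟨⟨k, j⟩, ⟨hk, hj⟩, t, ⟨⟨hpos, hsum⟩, harndt, hlen⟩, rfl⟩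
      simp only [hcns]
      dsimp only at hk hj hsum hlen ⊢
      have hj2 : 2 * (j + 1) ≤ k := by omega
      refine ⟨⟨?_, by simp; omega⟩, isArndt_cons_cons.mpr ⟨by omega, harndt⟩, by simp [hlen]⟩
      intro x hx
      simp at hx
      rcases hx with rfl | rfl | hx
      · omega
      · omega
      · exact hpos x hx
  have hdisj : ∀ p1 ∈ P, ∀ p2 ∈ P, p1 ≠ p2 → Disjoint (F p1) (F p2) := by
    rintro ⟨k1, j1⟩ hp1 ⟨k2, j2⟩ hp2 hne
    simp only [hP, Finset.mem_sigma, Finset.mem_range] at hp1 hp2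
    rw [Finset.disjoint_left]
    rintro l hl1 hl2
    simp only [hFdef, Finset.mem_image] at hl1 hl2
    obtain ⟨t1, -, rfl⟩ := hl1
    obtain ⟨t2, -, heq⟩ := hl2
    simp only [hcns, List.cons.injEq] at heq
    exact hne (by obtain ⟨h1, h2, -⟩ := heq; congr 1 <;> omega)
  have hinj : ∀ p : (Σ _ : ℕ, ℕ), Function.Injective (cns p) := by
    intro p l1 l2 h
    simpa [hcns] using h
  calc arndtParts n (m + 2) = (P.biUnion F).card := by
        rw [arndtParts, hset, Set.ncard_coe_finset]
    _ = ∑ p ∈ P, (F p).card := Finset.card_biUnion hdisj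
    _ = ∑ p ∈ P, arndtParts (p.1 - 2 * (p.2 + 1)) m := by
        refine Finset.sum_congr rfl fun p _ => ?_
        rw [hFdef, Finset.card_image_of_injective _ (hinj p), arndtParts,
          Set.ncard_eq_toFinset_card _ (hF p)]
    _ = ∑ k ∈ Finset.range n, aT k m := by
        rw [Finset.sum_sigma]
        rfl


lemma aT_zero (m : ℕ) : aT 0 m = 0 := by simp [aT]
lemma aT_one (m : ℕ) : aT 1 m = 0 := by simp [aT]

lemma aT_rec (n m : ℕ) : aT (n + 2) m = aT n m + arndtParts n m := by
  rw [aT, show (n + 2) / 2 = n / 2 + 1 by omega, Finset.sum_range_succ']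
  have h1 : n + 2 - 2 * (0 + 1) = n := by omega
  rw [h1]
  have h2 : ∀ j ∈ Finset.range (n / 2),
      arndtParts (n + 2 - 2 * (j + 1 + 1)) m = arndtParts (n - 2 * (j + 1)) m :=
    fun j _ => by rw [show n + 2 - 2 * (j + 1 + 1) = n - 2 * (j + 1) by omega]
  rw [Finset.sum_congr rfl h2, aT]

lemma key (n m : ℕ) : arndtParts (n + 3) (m + 2) + arndtParts n (m + 2)
    = arndtParts (n + 2) (m + 2) + arndtParts (n + 1) (m + 2) + arndtParts n m := by
  simp only [arndtParts_two, show n + 3 = (n + 2) + 1 from rfl, show n + 2 = (n + 1) + 1 from rfl,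
    show n + 1 = n + 1 from rfl, Finset.sum_range_succ, aT_rec]
  ring

lemma main (n m : ℕ) :
    (arndtParts n m : ℤ) - (if 1 ≤ n then (arndtParts (n - 1) m : ℤ) else 0)
      - (if 2 ≤ n then (arndtParts (n - 2) m : ℤ) else 0)
      + (if 3 ≤ n then (arndtParts (n - 3) m : ℤ) else 0)
      - (if 3 ≤ n ∧ 2 ≤ m then (arndtParts (n - 3) (m - 2) : ℤ) else 0)
    = (if n = 0 ∧ m = 0 then 1 else 0) - (if n = 1 ∧ m = 0 then 1 else 0)
      - (if n = 2 ∧ m = 0 then 1 else 0) + (if n = 3 ∧ m = 0 then 1 else 0)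
      + (if n = 1 ∧ m = 1 then 1 else 0) - (if n = 3 ∧ m = 1 then 1 else 0) := by
  match m with
  | 0 =>
    rcases n with _ | _ | _ | _ | n <;> simp [arndtParts_zero] <;> norm_num
  | 1 =>
    rcases n with _ | _ | _ | _ | n <;> simp [arndtParts_one] <;> norm_num
  | (m + 2) =>
    have h0 : arndtParts 0 (m + 2) = 0 := by simp [arndtParts_two]
    have h1 : arndtParts 1 (m + 2) = 0 := by simp [arndtParts_two, aT_zero]
    have h2 : arndtParts 2 (m + 2) = 0 := by
      rw [arndtParts_two]
      simp [Finset.sum_range_succ, aT_zero, aT_one]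
    match n with
    | 0 => simp [h0]
    | 1 => simp [h0, h1]
    | 2 => simp [h0, h1, h2]
    | (n + 3) =>
      have := key n m
      simp only [show n + 3 - 1 = n + 2 from rfl, show n + 3 - 2 = n + 1 from rfl,
        show n + 3 - 3 = n from rfl, show m + 2 - 2 = m from rfl]
      rw [if_pos (by omega), if_pos (by omega), if_pos (by omega), if_pos (by omega),
        if_neg (by omega), if_neg (by omega), if_neg (by omega), if_neg (by omega),
        if_neg (by omega), if_neg (by omega)]
      push_cast
      omega


/-- The generalized binomial coefficient `C(a,b) = a(a-1)⋯(a-b+1)/b!` for an integer `a`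
and a natural number `b` (represented as a nonnegative integer); it is `0` for negative `b`. -/
def genChoose (a b : ℤ) : ℤ :=
  if 0 ≤ b then (∏ i ∈ Finset.range b.toNat, (a - (i : ℤ))) / (b.toNat.factorial : ℤ) else 0

/-- The bivariate generating function `A(x,y) = Σ_{n,m≥0} a(n,m) xⁿ yᵐ`,
with `x = X 0` and `y = X 1`. -/
noncomputable def arndtGF : MvPowerSeries (Fin 2) ℤ :=
  fun d => (arndtParts (d 0) (d 1) : ℤ)

lemma coeff_arndtGF (e : Fin 2 →₀ ℕ) :
    MvPowerSeries.coeff e arndtGF = (arndtParts (e 0) (e 1) : ℤ) :=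
  by rw [MvPowerSeries.coeff_apply]; rfl

lemma fin2_le (e d : Fin 2 →₀ ℕ) : e ≤ d ↔ e 0 ≤ d 0 ∧ e 1 ≤ d 1 := by
  rw [Finsupp.le_def]
  constructor
  · exact fun h => ⟨h 0, h 1⟩
  · rintro ⟨h0, h1⟩ i
    match i with
    | 0 => exact h0
    | 1 => exact h1

lemma fin2_eq (e d : Fin 2 →₀ ℕ) : e = d ↔ e 0 = d 0 ∧ e 1 = d 1 := by
  constructor
  · rintro rfl; exact ⟨rfl, rfl⟩
  · rintro ⟨h0, h1⟩
    ext i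
    match i with
    | 0 => exact h0
    | 1 => exact h1



/-- `(1 - x - x² + x³ - x³y²) · A(x,y) = 1 - x - x² + x³ + xy - x³y`. -/
theorem arndtGF_eq :
    (1 - MvPowerSeries.X 0 - MvPowerSeries.X 0 ^ 2 + MvPowerSeries.X 0 ^ 3
        - MvPowerSeries.X 0 ^ 3 * MvPowerSeries.X 1 ^ 2) * arndtGF
      = 1 - MvPowerSeries.X 0 - MvPowerSeries.X 0 ^ 2 + MvPowerSeries.X 0 ^ 3
        + MvPowerSeries.X 0 * MvPowerSeries.X 1
        - MvPowerSeries.X 0 ^ 3 * MvPowerSeries.X 1 := by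
  apply MvPowerSeries.ext
  intro d
  simp only [sub_mul, add_mul, one_mul]
  simp only [MvPowerSeries.X_pow_eq]
  simp only [
    show (MvPowerSeries.X 0 : MvPowerSeries (Fin 2) ℤ)
      = MvPowerSeries.monomial (Finsupp.single 0 1) 1 from rfl,
    show (MvPowerSeries.X 1 : MvPowerSeries (Fin 2) ℤ)
      = MvPowerSeries.monomial (Finsupp.single 1 1) 1 from rfl,
    MvPowerSeries.monomial_mul_monomial]
  simp only [map_sub, map_add, MvPowerSeries.coeff_monomial_mul, MvPowerSeries.coeff_monomial,
    MvPowerSeries.coeff_one, one_mul, mul_one]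
  simp only [coeff_arndtGF, fin2_le, fin2_eq, Finsupp.add_apply, Finsupp.single_apply,
    Finsupp.tsub_apply, Finsupp.coe_zero, Pi.zero_apply]
  norm_num
  exact main (d 0) (d 1)
end

section
/- For each fixed integer m ≥ 1, a(n,m) ~ n^{m−1} / (2^{⌊m/2⌋} (m−1)!) as n → ∞; that is, the real sequence a(n,m) · 2^{⌊m/2⌋} · (m−1)! / n^{m−1} tends to 1 as n → ∞. -/
namespace ArndtAux
open Finset


lemma card_fiber (k s a : ℕ) (ha : a < s + 1) :
    ((Finset.Nat.antidiagonalTuple (k+2) s).filter (fun f => f 0 = a)).card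
      = (Finset.Nat.antidiagonalTuple (k+1) (s - a)).card := by
  classical
  have hi : ∀ f ∈ ((Finset.Nat.antidiagonalTuple (k+2) s).filter (fun f => f 0 = a)),
      Fin.tail f ∈ Finset.Nat.antidiagonalTuple (k+1) (s - a) := by
    intro f hf
    simp only [Finset.mem_filter, Finset.Nat.mem_antidiagonalTuple] at hf
    rw [Finset.Nat.mem_antidiagonalTuple]
    show ∑ i : Fin (k+1), Fin.tail f i = s - a
    have h2 : ∑ i : Fin (k+1), Fin.tail f i = ∑ i : Fin (k+1), f i.succ := rfl
    rw [h2]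
    have h1 : a + ∑ i : Fin (k+1), f i.succ = s := by
      rw [← hf.2, ← Fin.sum_univ_succ]; exact hf.1
    omega
  have hj : ∀ g ∈ Finset.Nat.antidiagonalTuple (k+1) (s - a),
      Fin.cons (α := fun _ => ℕ) a g
        ∈ ((Finset.Nat.antidiagonalTuple (k+2) s).filter (fun f => f 0 = a)) := by
    intro g hg
    rw [Finset.Nat.mem_antidiagonalTuple] at hg
    simp only [Finset.mem_filter, Finset.Nat.mem_antidiagonalTuple]
    have h2 : ∑ i : Fin (k+1), Fin.cons (α := fun _ => ℕ) a g i.succ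
        = ∑ i : Fin (k+1), g i := Finset.sum_congr rfl fun i _ => by rw [Fin.cons_succ]
    constructor
    · rw [Fin.sum_univ_succ, h2, hg]
      show a + (s - a) = s
      omega
    · exact Fin.cons_zero (α := fun _ => ℕ) a g
  exact Finset.card_bij' (fun f _ => Fin.tail f) (fun g _ => Fin.cons a g) hi hj
    (fun g hg => by
      simp only [Finset.mem_filter] at hg
      show Fin.cons a (Fin.tail g) = g
      rw [← hg.2]
      exact Fin.cons_self_tail g)
    (fun f hf => Fin.tail_cons (α := fun _ => ℕ) a f)

lemma sum_choose_shift (k s : ℕ) :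
    ∑ j ∈ range (s+1), (j + k).choose k = (s + (k+1)).choose (k+1) := by
  have hIcc := Nat.sum_Icc_choose (s + k) k
  rw [← Finset.Ico_add_one_right_eq_Icc, Finset.sum_Ico_eq_sum_range] at hIcc
  have h2 : s + k + 1 - k = s + 1 := by omega
  rw [h2] at hIcc
  have h3 : ∀ j ∈ range (s+1), (j + k).choose k = (k + j).choose k := by
    intro j hj; rw [Nat.add_comm]
  rw [Finset.sum_congr rfl h3, hIcc, Nat.add_assoc]

lemma card_adt : ∀ (k s : ℕ), (Finset.Nat.antidiagonalTuple (k+1) s).card = (s + k).choose k := by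
  intro k
  induction k with
  | zero =>
    intro s
    rw [Nat.choose_zero_right]
    refine Finset.card_eq_one.mpr ⟨fun _ => s, ?_⟩
    ext f
    simp only [Finset.Nat.mem_antidiagonalTuple, Finset.mem_singleton, Fin.sum_univ_one]
    constructor
    · intro h; funext i; rw [Fin.eq_zero i]; exact h
    · intro h; rw [h]; simp
  | succ k ih =>
    intro s
    classical
    have hfib : (Finset.Nat.antidiagonalTuple (k+2) s).card
        = ∑ a ∈ range (s+1),
            ((Finset.Nat.antidiagonalTuple (k+2) s).filter (fun f => f 0 = a)).card := by
      apply Finset.card_eq_sum_card_fiberwise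
      intro f hf
      rw [Finset.mem_coe, Finset.Nat.mem_antidiagonalTuple] at hf
      rw [Finset.mem_coe, Finset.mem_range]
      show f 0 < s + 1
      have : f 0 ≤ s := by
        rw [← hf, Fin.sum_univ_succ]
        exact Nat.le_add_right _ _
      omega
    rw [hfib]
    have h5 : ∀ a ∈ range (s+1),
        ((Finset.Nat.antidiagonalTuple (k+2) s).filter (fun f => f 0 = a)).card
          = ((s - a) + k).choose k := by
      intro a ha
      rw [Finset.mem_range] at ha
      rw [card_fiber k s a ha, ih (s - a)]
    rw [Finset.sum_congr rfl h5, ← Finset.sum_range_reflect]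
    have h4 : ∀ j ∈ range (s+1), ((s - (s + 1 - 1 - j)) + k).choose k = (j + k).choose k := by
      intro j hj
      rw [Finset.mem_range] at hj
      clear hfib h5
      congr 2
      omega
    rw [Finset.sum_congr rfl h4, sum_choose_shift]



/-- extension of a tuple to ℕ -/
def ext {m : ℕ} (f : Fin m → ℕ) : ℕ → ℕ := fun i => if h : i < m then f ⟨i, h⟩ else 0

lemma ext_lt {m : ℕ} (f : Fin m → ℕ) {i : ℕ} (h : i < m) : ext f i = f ⟨i, h⟩ := dif_pos h

lemma ext_coe {m : ℕ} (f : Fin m → ℕ) (i : Fin m) : ext f (i : ℕ) = f i := by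
  rw [ext_lt f i.2]

lemma sum_ext {m : ℕ} (f : Fin m → ℕ) : ∑ i : Fin m, f i = ∑ i ∈ range m, ext f i := by
  rw [Finset.sum_range]
  exact Finset.sum_congr rfl fun i _ => (ext_lt f i.2).symm

lemma sum_range_two_mul (g : ℕ → ℕ) (k : ℕ) :
    ∑ i ∈ range (2*k), g i = ∑ t ∈ range k, (g (2*t) + g (2*t+1)) := by
  induction k with
  | zero => simp
  | succ k ih =>
    rw [show 2*(k+1) = (2*k+1)+1 by ring, sum_range_succ, sum_range_succ, ih, sum_range_succ]
    omega

lemma sum_range_pair (g : ℕ → ℕ) (m : ℕ) :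
    ∑ i ∈ range m, g i
      = (∑ t ∈ range (m/2), (g (2*t) + g (2*t+1))) + m % 2 * g (m-1) := by
  rcases Nat.mod_two_eq_zero_or_one m with h2 | h2
  · have hm : m = 2 * (m/2) := by omega
    rw [h2, Nat.zero_mul, Nat.add_zero]
    conv_lhs => rw [hm]
    exact sum_range_two_mul g (m/2)
  · have hm : m = 2 * (m/2) + 1 := by omega
    conv_lhs => rw [hm]
    rw [sum_range_succ, sum_range_two_mul g (m/2), h2]
    have h3 : m - 1 = 2 * (m/2) := by omega
    rw [h3]; ring

open Classical in
noncomputable def A (m n : ℕ) : Finset (Fin m → ℕ) :=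
  (Finset.Nat.antidiagonalTuple m n).filter
    (fun f => (∀ i, 0 < f i) ∧
      ∀ i : Fin m, ∀ h : (i:ℕ) + 1 < m, (i:ℕ) % 2 = 0 → f ⟨(i:ℕ)+1, h⟩ < f i)

lemma mem_A {m n : ℕ} {f : Fin m → ℕ} :
    f ∈ A m n ↔ (∑ i, f i = n) ∧ (∀ i, 0 < f i) ∧
      ∀ i : Fin m, ∀ h : (i:ℕ) + 1 < m, (i:ℕ) % 2 = 0 → f ⟨(i:ℕ)+1, h⟩ < f i := by
  simp [A, Finset.mem_filter, Finset.Nat.mem_antidiagonalTuple, and_assoc]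

lemma mem_A' {m n : ℕ} {f : Fin m → ℕ} :
    f ∈ A m n ↔ (∑ i ∈ range m, ext f i = n) ∧ (∀ j < m, 0 < ext f j) ∧
      ∀ j : ℕ, j % 2 = 0 → j + 1 < m → ext f (j+1) < ext f j := by
  rw [mem_A, ← sum_ext]
  constructor
  · rintro ⟨h1, h2, h3⟩
    refine ⟨h1, fun j hj => by rw [ext_lt f hj]; exact h2 _, fun j hj hjm => ?_⟩
    rw [ext_lt f (by omega), ext_lt f (by omega)]
    exact h3 ⟨j, by omega⟩ hjm hj
  · rintro ⟨h1, h2, h3⟩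
    refine ⟨h1, fun i => by rw [← ext_coe f i]; exact h2 _ i.2, fun i h hev => ?_⟩
    have := h3 (i:ℕ) hev h
    rw [ext_lt f (by omega), ext_lt f (by omega)] at this
    convert this using 2

open Classical in
noncomputable def E (m t : ℕ) : Finset (Fin m → ℕ) :=
  (Finset.Nat.antidiagonalTuple m t).filter
    (fun h => ∀ i : Fin m, (i:ℕ) % 2 = 0 → (i:ℕ) + 1 < m → Even (h i))

lemma mem_E' {m t : ℕ} {h : Fin m → ℕ} :
    h ∈ E m t ↔ (∑ i ∈ range m, ext h i = t) ∧
      ∀ j : ℕ, j % 2 = 0 → j + 1 < m → ext h j % 2 = 0 := by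
  rw [E, Finset.mem_filter, Finset.Nat.mem_antidiagonalTuple, ← sum_ext]
  constructor
  · rintro ⟨h1, h2⟩
    refine ⟨h1, fun j hj hjm => ?_⟩
    rw [ext_lt h (by omega)]
    rw [← Nat.even_iff]
    exact h2 ⟨j, by omega⟩ hj hjm
  · rintro ⟨h1, h2⟩
    refine ⟨h1, fun i hi him => ?_⟩
    rw [Nat.even_iff, ← ext_coe h i]
    exact h2 (i:ℕ) hi him

noncomputable def toA (m : ℕ) (h : Fin m → ℕ) : Fin m → ℕ := fun i =>
  if (i:ℕ) + 1 < m ∧ (i:ℕ) % 2 = 0 then ext h (i:ℕ) / 2 + ext h ((i:ℕ)+1) + 2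
  else if (i:ℕ) % 2 = 1 then ext h ((i:ℕ)-1) / 2 + 1
  else ext h (i:ℕ) + 1

noncomputable def toE (m : ℕ) (f : Fin m → ℕ) : Fin m → ℕ := fun i =>
  if (i:ℕ) + 1 < m ∧ (i:ℕ) % 2 = 0 then 2 * (ext f ((i:ℕ)+1) - 1)
  else if (i:ℕ) % 2 = 1 then ext f ((i:ℕ)-1) - ext f (i:ℕ) - 1
  else ext f (i:ℕ) - 1

lemma ext_toA {m : ℕ} (h : Fin m → ℕ) {j : ℕ} (hj : j < m) :
    ext (toA m h) j
      = if j + 1 < m ∧ j % 2 = 0 then ext h j / 2 + ext h (j+1) + 2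
        else if j % 2 = 1 then ext h (j-1) / 2 + 1
        else ext h j + 1 := by
  rw [ext_lt _ hj]; rfl

lemma ext_toE {m : ℕ} (f : Fin m → ℕ) {j : ℕ} (hj : j < m) :
    ext (toE m f) j
      = if j + 1 < m ∧ j % 2 = 0 then 2 * (ext f (j+1) - 1)
        else if j % 2 = 1 then ext f (j-1) - ext f j - 1
        else ext f j - 1 := by
  rw [ext_lt _ hj]; rfl

lemma ext_ext_eq {m : ℕ} {f g : Fin m → ℕ} (H : ∀ j < m, ext f j = ext g j) : f = g := by
  funext i
  have := H (i:ℕ) i.2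
  rwa [ext_coe, ext_coe] at this

lemma toA_mem {m t : ℕ} {h : Fin m → ℕ} (hmem : h ∈ E m t) :
    toA m h ∈ A m (t + m + m/2) := by
  obtain ⟨hsum, hev⟩ := mem_E'.mp hmem
  rw [mem_A']
  refine ⟨?_, ?_, ?_⟩
  · have hpair : ∀ u ∈ range (m/2),
        ext (toA m h) (2*u) + ext (toA m h) (2*u+1)
          = (ext h (2*u) + ext h (2*u+1)) + 3 := by
      intro u hu
      rw [mem_range] at hu
      have h1 : 2*u + 1 < m := by omega
      rw [ext_toA h (by omega), ext_toA h h1]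
      have he := hev (2*u) (by omega) h1
      have e1 : 2*u+1-1 = 2*u := by omega
      rw [if_pos (⟨h1, by omega⟩ : 2*u + 1 < m ∧ 2*u % 2 = 0),
        if_neg (by omega : ¬(2*u+1+1 < m ∧ (2*u+1) % 2 = 0)),
        if_pos (by omega : (2*u+1) % 2 = 1), e1]
      omega
    rw [sum_range_pair, Finset.sum_congr rfl hpair, Finset.sum_add_distrib,
      Finset.sum_const, smul_eq_mul, card_range]
    rw [sum_range_pair] at hsum
    rcases Nat.mod_two_eq_zero_or_one m with h2|h2
    · rw [h2] at hsum ⊢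
      omega
    · have hl : ext (toA m h) (m-1) = ext h (m-1) + 1 := by
        rw [ext_toA h (by omega), if_neg (by omega), if_neg (by omega)]
      rw [h2] at hsum ⊢
      rw [hl]
      omega
  · intro j hj
    rw [ext_toA h hj]
    split_ifs <;> omega
  · intro j hj hjm
    rw [ext_toA h (by omega), ext_toA h (by omega)]
    have e1 : j+1-1 = j := by omega
    rw [if_pos (⟨hjm, hj⟩ : j + 1 < m ∧ j % 2 = 0),
      if_neg (by omega : ¬(j+1+1 < m ∧ (j+1) % 2 = 0)),
      if_pos (by omega : (j+1) % 2 = 1), e1]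
    omega

lemma sum_toE {m n : ℕ} {f : Fin m → ℕ} (hmem : f ∈ A m n) :
    (∑ i ∈ range m, ext (toE m f) i) + (m + m/2) = n := by
  obtain ⟨hsum, hpos, harndt⟩ := mem_A'.mp hmem
  have hpair : ∀ u ∈ range (m/2),
      ext f (2*u) + ext f (2*u+1)
        = (ext (toE m f) (2*u) + ext (toE m f) (2*u+1)) + 3 := by
    intro u hu
    rw [mem_range] at hu
    have h1 : 2*u + 1 < m := by omega
    have ha := harndt (2*u) (by omega) h1
    have hp0 := hpos (2*u) (by omega)
    have hp1 := hpos (2*u+1) h1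
    rw [ext_toE f (by omega), ext_toE f h1]
    have e1 : 2*u+1-1 = 2*u := by omega
    rw [if_pos (⟨h1, by omega⟩ : 2*u + 1 < m ∧ 2*u % 2 = 0),
      if_neg (by omega : ¬(2*u+1+1 < m ∧ (2*u+1) % 2 = 0)),
      if_pos (by omega : (2*u+1) % 2 = 1), e1]
    omega
  rw [sum_range_pair, Finset.sum_congr rfl hpair, Finset.sum_add_distrib,
    Finset.sum_const, smul_eq_mul, card_range] at hsum
  rw [sum_range_pair]
  rcases Nat.mod_two_eq_zero_or_one m with h2|h2
  · rw [h2] at hsum ⊢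
    omega
  · have hp := hpos (m-1) (by omega)
    have hl : ext (toE m f) (m-1) = ext f (m-1) - 1 := by
      rw [ext_toE f (by omega), if_neg (by omega), if_neg (by omega)]
    rw [h2] at hsum ⊢
    rw [hl]
    omega

lemma toE_mem {m t : ℕ} {f : Fin m → ℕ} (hmem : f ∈ A m (t + m + m/2)) :
    toE m f ∈ E m t := by
  have hs := sum_toE hmem
  rw [mem_E']
  refine ⟨by omega, ?_⟩
  intro j hj hjm
  rw [ext_toE f (by omega), if_pos (⟨hjm, hj⟩ : j + 1 < m ∧ j % 2 = 0)]
  omega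

lemma toE_toA {m t : ℕ} {h : Fin m → ℕ} (hmem : h ∈ E m t) :
    toE m (toA m h) = h := by
  obtain ⟨hsum, hev⟩ := mem_E'.mp hmem
  apply ext_ext_eq
  intro j hj
  rw [ext_toE (toA m h) hj]
  rcases Nat.mod_two_eq_zero_or_one j with hp|hp
  · by_cases h1 : j + 1 < m
    · have he := hev j hp h1
      rw [if_pos (⟨h1, hp⟩ : j + 1 < m ∧ j % 2 = 0), ext_toA h h1,
        if_neg (by omega : ¬(j+1+1 < m ∧ (j+1) % 2 = 0)),
        if_pos (by omega : (j+1) % 2 = 1)]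
      have e1 : j+1-1 = j := by omega
      rw [e1]
      omega
    · rw [if_neg (by omega), if_neg (by omega), ext_toA h hj,
        if_neg (by omega), if_neg (by omega)]
      omega
  · have h1 : (j-1) + 1 < m := by omega
    have e1 : j - 1 + 1 = j := by omega
    rw [if_neg (by omega), if_pos hp, ext_toA h (by omega), ext_toA h hj,
      if_pos (⟨h1, by omega⟩ : (j-1) + 1 < m ∧ (j-1) % 2 = 0),
      if_neg (by omega : ¬(j + 1 < m ∧ j % 2 = 0)), if_pos hp, e1]
    omega

lemma toA_toE {m n : ℕ} {f : Fin m → ℕ} (hmem : f ∈ A m n) :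
    toA m (toE m f) = f := by
  obtain ⟨hsum, hpos, harndt⟩ := mem_A'.mp hmem
  apply ext_ext_eq
  intro j hj
  rw [ext_toA (toE m f) hj]
  rcases Nat.mod_two_eq_zero_or_one j with hp|hp
  · by_cases h1 : j + 1 < m
    · have ha := harndt j hp h1
      have hp1 := hpos (j+1) h1
      rw [if_pos (⟨h1, hp⟩ : j + 1 < m ∧ j % 2 = 0), ext_toE f h1, ext_toE f hj,
        if_pos (⟨h1, hp⟩ : j + 1 < m ∧ j % 2 = 0),
        if_neg (by omega : ¬(j+1+1 < m ∧ (j+1) % 2 = 0)),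
        if_pos (by omega : (j+1) % 2 = 1)]
      have e1 : j+1-1 = j := by omega
      rw [e1]
      omega
    · have hp0 := hpos j hj
      rw [if_neg (by omega), if_neg (by omega), ext_toE f hj,
        if_neg (by omega), if_neg (by omega)]
      omega
  · have h1 : (j-1) + 1 < m := by omega
    have e1 : j - 1 + 1 = j := by omega
    have hp0 := hpos j hj
    rw [if_neg (by omega), if_pos hp, ext_toE f (by omega),
      if_pos (⟨h1, by omega⟩ : (j-1) + 1 < m ∧ (j-1) % 2 = 0), e1]
    omega

lemma card_A_eq_card_E (m t : ℕ) : (A m (t + m + m/2)).card = (E m t).card := by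
  exact Finset.card_bij' (fun f _ => toE m f) (fun h _ => toA m h)
    (fun f hf => toE_mem hf)
    (fun h hh => toA_mem hh)
    (fun f hf => toA_toE hf)
    (fun h hh => toE_toA hh)

lemma mem_adt' {m s : ℕ} {x : Fin m → ℕ} :
    x ∈ Finset.Nat.antidiagonalTuple m s ↔ ∑ i ∈ range m, ext x i = s := by
  rw [Finset.Nat.mem_antidiagonalTuple, ← sum_ext]

/-- sum of parities at pair-even positions -/
noncomputable def pc (m : ℕ) (x : Fin m → ℕ) : ℕ := ∑ u ∈ range (m/2), ext x (2*u) % 2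

noncomputable def corr (m : ℕ) (x : Fin m → ℕ) : Fin m → ℕ := fun i =>
  if (i:ℕ) + 1 < m ∧ (i:ℕ) % 2 = 0 then ext x (i:ℕ) - ext x (i:ℕ) % 2
  else if (i:ℕ) = m - 1 then ext x (i:ℕ) + pc m x
  else ext x (i:ℕ)

lemma ext_corr {m : ℕ} (x : Fin m → ℕ) {j : ℕ} (hj : j < m) :
    ext (corr m x) j
      = if j + 1 < m ∧ j % 2 = 0 then ext x j - ext x j % 2
        else if j = m - 1 then ext x j + pc m x
        else ext x j := by
  rw [ext_lt _ hj]; rfl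

lemma sum_corr {m s : ℕ} (hm : 1 ≤ m) {x : Fin m → ℕ}
    (hx : ∑ i ∈ range m, ext x i = s) :
    ∑ i ∈ range m, ext (corr m x) i = s := by
  have key : ∀ j ∈ range m,
      ext (corr m x) j + (if j + 1 < m ∧ j % 2 = 0 then ext x j % 2 else 0)
        = ext x j + (if j = m - 1 then pc m x else 0) := by
    intro j hj
    rw [mem_range] at hj
    rw [ext_corr x hj]
    split_ifs <;> omega
  have h1 : ∑ j ∈ range m, (ext (corr m x) j + (if j + 1 < m ∧ j % 2 = 0 then ext x j % 2 else 0))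
      = ∑ j ∈ range m, (ext x j + (if j = m - 1 then pc m x else 0)) :=
    Finset.sum_congr rfl key
  rw [Finset.sum_add_distrib, Finset.sum_add_distrib] at h1
  have h2 : ∑ j ∈ range m, (if j = m - 1 then pc m x else 0) = pc m x := by
    rw [Finset.sum_ite_eq' (range m) (m-1) (fun _ => pc m x)]
    rw [if_pos (by rw [mem_range]; omega)]
  have h3 : ∑ j ∈ range m, (if j + 1 < m ∧ j % 2 = 0 then ext x j % 2 else 0) = pc m x := by
    rw [sum_range_pair]
    have hp : ∀ u ∈ range (m/2),
        ((if 2*u + 1 < m ∧ 2*u % 2 = 0 then ext x (2*u) % 2 else 0)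
          + (if 2*u+1 + 1 < m ∧ (2*u+1) % 2 = 0 then ext x (2*u+1) % 2 else 0))
        = ext x (2*u) % 2 := by
      intro u hu
      rw [mem_range] at hu
      rw [if_pos (by constructor <;> omega), if_neg (by omega)]
      omega
    rw [Finset.sum_congr rfl hp]
    have hl : (if (m-1) + 1 < m ∧ (m-1) % 2 = 0 then ext x (m-1) % 2 else 0) = 0 := by
      rw [if_neg (by omega)]
    rw [hl, pc]
    omega
  rw [h2, h3] at h1
  omega

lemma corr_mem {m s : ℕ} (hm : 1 ≤ m) {x : Fin m → ℕ}
    (hx : x ∈ Finset.Nat.antidiagonalTuple m s) : corr m x ∈ E m s := by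
  rw [mem_adt'] at hx
  rw [mem_E']
  refine ⟨sum_corr hm hx, ?_⟩
  intro j hj hjm
  rw [ext_corr x (by omega), if_pos (⟨hjm, hj⟩ : j + 1 < m ∧ j % 2 = 0)]
  omega

lemma card_adt_le (m s : ℕ) (hm : 1 ≤ m) :
    (Finset.Nat.antidiagonalTuple m s).card ≤ 2^(m/2) * (E m s).card := by
  classical
  have hcard : ((Finset.univ : Finset (Fin (m/2) → Bool)) ×ˢ E m s).card
      = 2^(m/2) * (E m s).card := by
    rw [Finset.card_product, Finset.card_univ, Fintype.card_fun]
    simp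
  rw [← hcard]
  apply Finset.card_le_card_of_injOn
    (fun x => (fun t : Fin (m/2) => decide (ext x (2*(t:ℕ)) % 2 = 1), corr m x))
  · intro x hx
    rw [Finset.mem_coe, Finset.mem_product]
    exact ⟨Finset.mem_univ _, corr_mem hm hx⟩
  · intro x hx y hy hxy
    rw [Finset.mem_coe, mem_adt'] at hx hy
    have hb : ∀ u : ℕ, u < m/2 → ext x (2*u) % 2 = ext y (2*u) % 2 := by
      intro u hu
      have := congrFun (congrArg Prod.fst hxy) ⟨u, hu⟩
      simp only [decide_eq_decide] at this
      omega
    have hpc : pc m x = pc m y := by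
      apply Finset.sum_congr rfl
      intro u hu
      rw [mem_range] at hu
      exact hb u hu
    have hcorr : corr m x = corr m y := congrArg Prod.snd hxy
    apply ext_ext_eq
    intro j hj
    have hc : ext (corr m x) j = ext (corr m y) j := by rw [hcorr]
    rcases Nat.mod_two_eq_zero_or_one j with hp|hp
    · by_cases h1 : j + 1 < m
      · have ex : ext (corr m x) j = ext x j - ext x j % 2 := by
          rw [ext_corr x hj, if_pos (⟨h1, hp⟩ : j + 1 < m ∧ j % 2 = 0)]
        have ey : ext (corr m y) j = ext y j - ext y j % 2 := by
          rw [ext_corr y hj, if_pos (⟨h1, hp⟩ : j + 1 < m ∧ j % 2 = 0)]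
        rw [ex, ey] at hc
        have hb2 := hb (j/2) (by omega)
        have e1 : 2*(j/2) = j := by omega
        rw [e1] at hb2
        omega
      · by_cases h2 : j = m - 1
        · have ex : ext (corr m x) j = ext x j + pc m x := by
            rw [ext_corr x hj, if_neg (by omega), if_pos h2]
          have ey : ext (corr m y) j = ext y j + pc m y := by
            rw [ext_corr y hj, if_neg (by omega), if_pos h2]
          rw [ex, ey, hpc] at hc
          omega
        · have ex : ext (corr m x) j = ext x j := by
            rw [ext_corr x hj, if_neg (by omega), if_neg h2]
          have ey : ext (corr m y) j = ext y j := by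
            rw [ext_corr y hj, if_neg (by omega), if_neg h2]
          rw [ex, ey] at hc
          exact hc
    · by_cases h2 : j = m - 1
      · have ex : ext (corr m x) j = ext x j + pc m x := by
          rw [ext_corr x hj, if_neg (by omega), if_pos h2]
        have ey : ext (corr m y) j = ext y j + pc m y := by
          rw [ext_corr y hj, if_neg (by omega), if_pos h2]
        rw [ex, ey, hpc] at hc
        omega
      · have ex : ext (corr m x) j = ext x j := by
          rw [ext_corr x hj, if_neg (by omega), if_neg h2]
        have ey : ext (corr m y) j = ext y j := by
          rw [ext_corr y hj, if_neg (by omega), if_neg h2]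
        rw [ex, ey] at hc
        exact hc

noncomputable def bitext (m : ℕ) (b : Fin (m/2) → Bool) : ℕ → ℕ := fun u =>
  if h : u < m/2 then (if b ⟨u, h⟩ then 1 else 0) else 0

noncomputable def wt (m : ℕ) (b : Fin (m/2) → Bool) : ℕ := ∑ u ∈ range (m/2), bitext m b u

lemma wt_le (m : ℕ) (b : Fin (m/2) → Bool) : wt m b ≤ m/2 := by
  have : ∀ u ∈ range (m/2), bitext m b u ≤ 1 := by
    intro u hu
    rw [mem_range] at hu
    rw [bitext, dif_pos hu]
    split_ifs <;> omega
  calc wt m b ≤ ∑ u ∈ range (m/2), 1 := Finset.sum_le_sum this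
    _ = m/2 := by simp

noncomputable def dn (m : ℕ) (b : Fin (m/2) → Bool) (h : Fin m → ℕ) : Fin m → ℕ := fun i =>
  if (i:ℕ) + 1 < m ∧ (i:ℕ) % 2 = 0 then ext h (i:ℕ) + bitext m b ((i:ℕ)/2)
  else if (i:ℕ) = m - 1 then ext h (i:ℕ) + (m/2 - wt m b)
  else ext h (i:ℕ)

lemma ext_dn {m : ℕ} (b : Fin (m/2) → Bool) (h : Fin m → ℕ) {j : ℕ} (hj : j < m) :
    ext (dn m b h) j
      = if j + 1 < m ∧ j % 2 = 0 then ext h j + bitext m b (j/2)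
        else if j = m - 1 then ext h j + (m/2 - wt m b)
        else ext h j := by
  rw [ext_lt _ hj]; rfl

lemma sum_dn {m t : ℕ} (hm : 1 ≤ m) (b : Fin (m/2) → Bool) {h : Fin m → ℕ}
    (hx : ∑ i ∈ range m, ext h i = t) :
    ∑ i ∈ range m, ext (dn m b h) i = t + m/2 := by
  have key : ∀ j ∈ range m,
      ext (dn m b h) j
        = ext h j + ((if j + 1 < m ∧ j % 2 = 0 then bitext m b (j/2) else 0)
            + (if j = m - 1 then m/2 - wt m b else 0)) := by
    intro j hj
    rw [mem_range] at hj
    rw [ext_dn b h hj]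
    split_ifs with c1 c2 c3 <;> omega
  rw [Finset.sum_congr rfl key, Finset.sum_add_distrib, Finset.sum_add_distrib, hx]
  have h2 : ∑ j ∈ range m, (if j = m - 1 then m/2 - wt m b else 0) = m/2 - wt m b := by
    rw [Finset.sum_ite_eq' (range m) (m-1) (fun _ => m/2 - wt m b)]
    rw [if_pos (by rw [mem_range]; omega)]
  have h3 : ∑ j ∈ range m, (if j + 1 < m ∧ j % 2 = 0 then bitext m b (j/2) else 0) = wt m b := by
    rw [sum_range_pair]
    have hp : ∀ u ∈ range (m/2),
        ((if 2*u + 1 < m ∧ 2*u % 2 = 0 then bitext m b (2*u/2) else 0)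
          + (if 2*u+1 + 1 < m ∧ (2*u+1) % 2 = 0 then bitext m b ((2*u+1)/2) else 0))
        = bitext m b u := by
      intro u hu
      rw [mem_range] at hu
      rw [if_pos (by constructor <;> omega), if_neg (by omega)]
      have e1 : 2*u/2 = u := by omega
      rw [e1]
      omega
    rw [Finset.sum_congr rfl hp]
    have hl : (if (m-1) + 1 < m ∧ (m-1) % 2 = 0 then bitext m b ((m-1)/2) else 0) = 0 := by
      rw [if_neg (by omega)]
    rw [hl]
    simp [wt]
  rw [h2, h3]
  have := wt_le m b
  omega

lemma dn_mem {m t : ℕ} (hm : 1 ≤ m) (b : Fin (m/2) → Bool) {h : Fin m → ℕ}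
    (hmem : h ∈ E m t) : dn m b h ∈ Finset.Nat.antidiagonalTuple m (t + m/2) := by
  obtain ⟨hsum, _⟩ := mem_E'.mp hmem
  rw [mem_adt']
  exact sum_dn hm b hsum

lemma le_card_adt (m t : ℕ) (hm : 1 ≤ m) :
    2^(m/2) * (E m t).card ≤ (Finset.Nat.antidiagonalTuple m (t + m/2)).card := by
  classical
  have hcard : ((Finset.univ : Finset (Fin (m/2) → Bool)) ×ˢ E m t).card
      = 2^(m/2) * (E m t).card := by
    rw [Finset.card_product, Finset.card_univ, Fintype.card_fun]
    simp
  rw [← hcard]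
  apply Finset.card_le_card_of_injOn (fun p => dn m p.1 p.2)
  · intro p hp
    rw [Finset.mem_coe, Finset.mem_product] at hp
    exact dn_mem hm p.1 hp.2
  · rintro ⟨b, h⟩ hbh ⟨b', h'⟩ hbh' heq
    rw [Finset.mem_coe, Finset.mem_product] at hbh hbh'
    have hbh2 : h ∈ E m t := hbh.2
    have hbh2' : h' ∈ E m t := hbh'.2
    obtain ⟨hs, hev⟩ := mem_E'.mp hbh2
    obtain ⟨hs', hev'⟩ := mem_E'.mp hbh2'
    have hc : ∀ j < m, ext (dn m b h) j = ext (dn m b' h') j := by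
      intro j hj
      rw [show dn m b h = dn m b' h' from heq]
    -- first: bits agree
    have hbits : ∀ u : ℕ, ∀ hu : u < m/2, b ⟨u, hu⟩ = b' ⟨u, hu⟩ := by
      intro u hu
      have h1 : 2*u + 1 < m := by omega
      have hcj := hc (2*u) (by omega)
      have ex : ext (dn m b h) (2*u) = ext h (2*u) + bitext m b u := by
        rw [ext_dn b h (by omega), if_pos (by constructor <;> omega)]
        congr 1
        congr 1
        omega
      have ey : ext (dn m b' h') (2*u) = ext h' (2*u) + bitext m b' u := by
        rw [ext_dn b' h' (by omega), if_pos (by constructor <;> omega)]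
        congr 1
        congr 1
        omega
      rw [ex, ey] at hcj
      have he := hev (2*u) (by omega) h1
      have he' := hev' (2*u) (by omega) h1
      rw [bitext, dif_pos hu, bitext, dif_pos hu] at hcj
      rcases Bool.eq_false_or_eq_true (b ⟨u, hu⟩) with hb1|hb1 <;>
        rcases Bool.eq_false_or_eq_true (b' ⟨u, hu⟩) with hb2|hb2 <;>
          rw [hb1, hb2] at hcj ⊢ <;> simp at hcj ⊢ <;> omega
    have hbeq : b = b' := by
      funext u
      have := hbits (u:ℕ) u.2
      simpa using this
    have hext : ∀ j < m, ext h j = ext h' j := by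
      intro j hj
      have hcj := hc j hj
      rw [ext_dn b h hj, ext_dn b' h' hj, hbeq] at hcj
      split_ifs at hcj <;> omega
    have : h = h' := ext_ext_eq hext
    rw [hbeq, this]

lemma arndtParts_eq (n m : ℕ) : arndtParts n m = (A m n).card := by
  have hset : {l : List ℕ | IsComposition n l ∧ IsArndt l ∧ l.length = m}
      = ↑((A m n).image List.ofFn) := by
    ext l
    simp only [Set.mem_setOf_eq, Finset.coe_image, Set.mem_image, Finset.mem_coe]
    constructor
    · rintro ⟨⟨hpos, hsum⟩, harndt, hlen⟩
      refine ⟨fun i : Fin m => l.getD (i:ℕ) 0, ?_, ?_⟩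
      · rw [mem_A]
        have hgetD : ∀ j : ℕ, ∀ h : j < m, l.getD j 0 = l[j]'(by omega) := by
          intro j h
          exact List.getD_eq_getElem l 0 (by omega)
        refine ⟨?_, ?_, ?_⟩
        · rw [← hsum, ← List.sum_ofFn]
          congr 1
          apply List.ext_getElem
          · simp [hlen]
          · intro i h1 h2
            simp only [List.getElem_ofFn]
            exact (hgetD i (by omega)).symm ▸ (hgetD i (by omega)) ▸ rfl
        · intro i
          have := hgetD (i:ℕ) i.2
          rw [this]
          apply hpos
          exact List.getElem_mem _
        · intro i h hev
          have h1 : 2 * ((i:ℕ)/2) = (i:ℕ) := by omega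
          have h2 := harndt ((i:ℕ)/2) (by omega)
          rw [h1] at h2
          exact h2
      · apply List.ext_getElem
        · simp [hlen]
        · intro i h1 h2
          simp only [List.getElem_ofFn]
          exact List.getD_eq_getElem l 0 (by omega)
    · rintro ⟨f, hf, rfl⟩
      rw [mem_A] at hf
      obtain ⟨hsum, hpos, harndt⟩ := hf
      refine ⟨⟨?_, ?_⟩, ?_, ?_⟩
      · intro x hx
        rw [List.mem_ofFn] at hx
        obtain ⟨i, rfl⟩ := hx
        exact hpos i
      · rw [List.sum_ofFn, hsum]
      · intro t ht
        rw [List.length_ofFn] at ht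
        rw [List.getD_eq_getElem _ 0 (by rw [List.length_ofFn]; omega),
            List.getD_eq_getElem _ 0 (by rw [List.length_ofFn]; omega)]
        simp only [List.getElem_ofFn]
        have := harndt ⟨2*t, by omega⟩ (by simpa using ht) (by simp [Nat.mul_mod_right])
        exact this
      · exact List.length_ofFn
  rw [arndtParts, hset, Set.ncard_coe_finset,
    Finset.card_image_of_injective _ List.ofFn_injective]


lemma key (m n : ℕ) (hm : 1 ≤ m) (hn : m + m/2 ≤ n) :
    (n - m/2 - 1).choose (m-1) ≤ arndtParts n m * 2^(m/2)
      ∧ arndtParts n m * 2^(m/2) ≤ (n-1).choose (m-1) := by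
  set t := n - m - m/2 with ht
  have hnt : n = t + m + m/2 := by omega
  have hae : arndtParts n m = (E m t).card := by
    rw [arndtParts_eq, hnt, card_A_eq_card_E]
  have hadt1 : (Finset.Nat.antidiagonalTuple m t).card = (t + (m-1)).choose (m-1) := by
    have := card_adt (m-1) t
    rw [show m - 1 + 1 = m from by omega] at this
    exact this
  have hadt2 : (Finset.Nat.antidiagonalTuple m (t + m/2)).card
      = (t + m/2 + (m-1)).choose (m-1) := by
    have := card_adt (m-1) (t + m/2)
    rw [show m - 1 + 1 = m from by omega] at this
    exact this
  constructor
  · have h1 := card_adt_le m t hm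
    rw [hadt1] at h1
    rw [hae, Nat.mul_comm]
    rw [show n - m/2 - 1 = t + (m-1) from by omega]
    exact h1
  · have h2 := le_card_adt m t hm
    rw [hadt2] at h2
    rw [hae, Nat.mul_comm]
    rw [show n - 1 = t + m/2 + (m-1) from by omega]
    exact h2

lemma tendsto_sub_div (c : ℕ) :
    Filter.Tendsto (fun n : ℕ => ((n - c : ℕ) : ℝ) / (n : ℝ)) Filter.atTop (nhds 1) := by
  have h1 : Filter.Tendsto (fun n : ℕ => 1 - (c:ℝ) * (1/(n:ℝ))) Filter.atTop (nhds 1) := by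
    have h2 := tendsto_one_div_atTop_nhds_zero_nat.const_mul (c:ℝ)
    have h3 := (tendsto_const_nhds (x := (1:ℝ)) (f := (Filter.atTop : Filter ℕ))).sub h2
    simpa using h3
  apply h1.congr'
  filter_upwards [Filter.eventually_ge_atTop (c+1)] with n hn
  have hn0 : (n:ℝ) ≠ 0 := Nat.cast_ne_zero.mpr (by omega)
  rw [Nat.cast_sub (by omega)]
  field_simp

lemma tendsto_descF (c r : ℕ) :
    Filter.Tendsto (fun n : ℕ => (((n - c).descFactorial r : ℕ) : ℝ) / (n : ℝ)^r)
      Filter.atTop (nhds 1) := by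
  have hprod : Filter.Tendsto
      (fun n : ℕ => ∏ i ∈ range r, (((n - (c+i) : ℕ) : ℝ) / (n : ℝ)))
      Filter.atTop (nhds (∏ _i ∈ range r, (1:ℝ))) :=
    tendsto_finset_prod _ (fun i _ => tendsto_sub_div (c+i))
  rw [Finset.prod_const_one] at hprod
  apply hprod.congr'
  filter_upwards [Filter.eventually_ge_atTop (c+r+1)] with n hn
  rw [Nat.descFactorial_eq_prod_range, Nat.cast_prod,
    show ((n:ℝ))^r = ∏ _i ∈ range r, (n:ℝ) from by rw [Finset.prod_const, card_range],
    ← Finset.prod_div_distrib]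
  apply Finset.prod_congr rfl
  intro i hi
  rw [Nat.sub_sub]

end ArndtAux

/-- for fixed `m ≥ 1`, `a(n,m) ~ n^{m-1}/(2^{⌊m/2⌋}(m-1)!)` as `n → ∞`. -/
theorem arndtParts_asymptotic (m : ℕ) (hm : 1 ≤ m) :
    Filter.Tendsto
      (fun n : ℕ =>
        (arndtParts n m : ℝ) * 2 ^ (m / 2) * (m - 1).factorial / (n : ℝ) ^ (m - 1))
      Filter.atTop (nhds 1) := by
  apply tendsto_of_tendsto_of_tendsto_of_le_of_le'
    (ArndtAux.tendsto_descF (m/2 + 1) (m-1)) (ArndtAux.tendsto_descF 1 (m-1))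
  · filter_upwards [Filter.eventually_ge_atTop (m + m/2 + 1)] with n hn
    have hkey := (ArndtAux.key m n hm (by omega)).1
    have hnat : (n - (m/2+1)).descFactorial (m-1) ≤ arndtParts n m * 2^(m/2) * (m-1).factorial := by
      rw [show n - (m/2+1) = n - m/2 - 1 from by omega,
        Nat.descFactorial_eq_factorial_mul_choose]
      calc (m-1).factorial * (n - m/2 - 1).choose (m-1)
          ≤ (m-1).factorial * (arndtParts n m * 2^(m/2)) :=
            Nat.mul_le_mul_left _ hkey
        _ = arndtParts n m * 2^(m/2) * (m-1).factorial := by ring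
    have hc : ((arndtParts n m * 2^(m/2) * (m-1).factorial : ℕ) : ℝ)
        = (arndtParts n m : ℝ) * 2 ^ (m / 2) * ((m - 1).factorial : ℝ) := by
      push_cast
      ring
    rw [← hc]
    gcongr
    all_goals exact_mod_cast hnat
  · filter_upwards [Filter.eventually_ge_atTop (m + m/2 + 1)] with n hn
    have hkey := (ArndtAux.key m n hm (by omega)).2
    have hnat : arndtParts n m * 2^(m/2) * (m-1).factorial ≤ (n - 1).descFactorial (m-1) := by
      rw [Nat.descFactorial_eq_factorial_mul_choose]
      calc arndtParts n m * 2^(m/2) * (m-1).factorial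
          = (m-1).factorial * (arndtParts n m * 2^(m/2)) := by ring
        _ ≤ (m-1).factorial * (n-1).choose (m-1) := Nat.mul_le_mul_left _ hkey
    have hc : ((arndtParts n m * 2^(m/2) * (m-1).factorial : ℕ) : ℝ)
        = (arndtParts n m : ℝ) * 2 ^ (m / 2) * ((m - 1).factorial : ℝ) := by
      push_cast
      ring
    rw [← hc]
    gcongr
    all_goals exact_mod_cast hnat
end
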